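/- Over a field k of characteristic 0, consider the regular sequence σ = (x_0, x_3²) in k[x_0,x_1,x_2,x_3]. For any linear form h = ax_0+bx_1+cx_2+dx_3 and nonzero scalars α, β, the kernel of the Jacobian matrix of σ' = (αx_0, x_0h + βx_3²) is a free module of rank 2; more precisely, if b = c = 0 it is generated by two degree-0 syzygies (0,1,0,0) and (0,0,1,0), and otherwise it is generated by one degree-0 and one degree-1 syzygy. -/

import Mathlib

open MvPolynomial

lemma aux_prime_X0 {k : Type*} [Field k] : Prime (X 0 : MvPolynomial (Fin 4) k) := by
  rw [← MulEquiv.prime_iff (MvPolynomial.finSuccEquiv k 3).toRingEquiv.toMulEquiv]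
  have : (MvPolynomial.finSuccEquiv k 3).toRingEquiv.toMulEquiv (X 0) = Polynomial.X := by
    simpa using MvPolynomial.finSuccEquiv_X_zero (R := k) (n := 3)
  rw [this]
  exact Polynomial.prime_X

lemma aux_not_dvd {k : Type*} [Field k] [CharZero k] (d β : k) (hβ : β ≠ 0) :
    ¬ (X 0 : MvPolynomial (Fin 4) k) ∣ (C d * X 0 + C (2*β) * X 3) := by
  intro ⟨r, hr⟩
  have := congrArg (aeval (fun i : Fin 4 => if i = 0 then 0 else X i :
      Fin 4 → MvPolynomial (Fin 4) k)) hr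
  simp only [map_add, map_mul, aeval_X, aeval_C, algebraMap_eq, if_pos, if_neg] at this
  simp only [reduceIte, Fin.reduceEq] at this
  rw [mul_zero, zero_add, zero_mul, ← C_mul, C_mul_X_eq_monomial, monomial_eq_zero] at this
  exact hβ (by simpa using this)

lemma aux_p_ne {k : Type*} [Field k] [CharZero k] (d β : k) (hβ : β ≠ 0) :
    (C d * X 0 + C (2*β) * X 3 : MvPolynomial (Fin 4) k) ≠ 0 := by
  intro h
  exact aux_not_dvd d β hβ (h ▸ dvd_zero _)

set_option maxHeartbeats 1000000 in
/-- For `σ' = (αx₀, x₀h + βx₃²)` with `h = ax₀+bx₁+cx₂+dx₃` and `α,β ≠ 0`, the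
kernel of the Jacobian matrix is free of rank 2: if `b = c = 0` it is generated
by the degree-0 syzygies `(0,1,0,0)` and `(0,0,1,0)`, and otherwise by one
degree-0 and one degree-1 syzygy. -/
theorem stmt_19 {k : Type*} [Field k] [CharZero k]
    (a b c d α β : k) (hα : α ≠ 0) (hβ : β ≠ 0) :
    let J : Matrix (Fin 2) (Fin 4) (MvPolynomial (Fin 4) k) :=
      Matrix.of
        ![fun j => pderiv j (C α * X 0),
          fun j => pderiv j
            (X 0 * (C a * X 0 + C b * X 1 + C c * X 2 + C d * X 3) + C β * X 3 ^ 2)]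
    (b = 0 ∧ c = 0 →
      LinearMap.ker J.mulVecLin =
        Submodule.span (MvPolynomial (Fin 4) k)
          ({![0, 1, 0, 0], ![0, 0, 1, 0]} : Set (Fin 4 → MvPolynomial (Fin 4) k)) ∧
      LinearIndependent (MvPolynomial (Fin 4) k)
        ![(![0, 1, 0, 0] : Fin 4 → MvPolynomial (Fin 4) k), ![0, 0, 1, 0]]) ∧
    (¬(b = 0 ∧ c = 0) →
      ∃ ν₁ ν₂ : Fin 4 → MvPolynomial (Fin 4) k,
        (∀ i, (ν₁ i).IsHomogeneous 0) ∧ (∀ i, (ν₂ i).IsHomogeneous 1) ∧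
        LinearMap.ker J.mulVecLin =
          Submodule.span (MvPolynomial (Fin 4) k)
            ({ν₁, ν₂} : Set (Fin 4 → MvPolynomial (Fin 4) k)) ∧
        LinearIndependent (MvPolynomial (Fin 4) k) ![ν₁, ν₂]) := by
  intro J
  have hJdef : J = Matrix.of
        ![fun j => pderiv j (C α * X 0),
          fun j => pderiv j
            (X 0 * (C a * X 0 + C b * X 1 + C c * X 2 + C d * X 3) + C β * X 3 ^ 2)] := rfl
  have hCα : (C α : MvPolynomial (Fin 4) k) ≠ 0 := by simpa using hα
  have hX0 : (X 0 : MvPolynomial (Fin 4) k) ≠ 0 := aux_prime_X0.ne_zero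
  have hC2 : (C 2 * C β : MvPolynomial (Fin 4) k) = C (2*β) := by rw [C_mul]
  have happ : ∀ v : Fin 4 → MvPolynomial (Fin 4) k, J.mulVecLin v =
      ![C α * v 0, (C (2*a) * X 0 + C b * X 1 + C c * X 2 + C d * X 3) * v 0 +
        (C b * X 0 * v 1 + C c * X 0 * v 2 + (C d * X 0 + C (2*β) * X 3) * v 3)] := by
    intro v
    funext i
    fin_cases i <;>
      simp [hJdef, Matrix.mulVecLin_apply, Matrix.mulVec, dotProduct, Fin.sum_univ_four,
        pderiv_mul, pderiv_pow, pderiv_X, C_mul, map_ofNat] <;> ring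
  have hker : ∀ v : Fin 4 → MvPolynomial (Fin 4) k, v ∈ LinearMap.ker J.mulVecLin ↔
      (v 0 = 0 ∧
        C b * X 0 * v 1 + C c * X 0 * v 2 + (C d * X 0 + C (2*β) * X 3) * v 3 = 0) := by
    intro v
    rw [LinearMap.mem_ker, happ v]
    constructor
    · intro hv
      have h0 := congrFun hv 0
      have h1 := congrFun hv 1
      simp only [Matrix.cons_val_zero, Matrix.cons_val_one, Matrix.head_cons,
        Pi.zero_apply] at h0 h1
      have hv0 : v 0 = 0 := by
        rcases mul_eq_zero.1 h0 with h | h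
        · exact absurd h hCα
        · exact h
      refine ⟨hv0, ?_⟩
      rw [hv0] at h1
      linear_combination h1
    · rintro ⟨h0, h1⟩
      funext i
      simp only [C_mul] at h1
      fin_cases i <;> simp [h0, C_mul] <;> linear_combination h1
  constructor
  · -- case b = 0, c = 0
    rintro ⟨rfl, rfl⟩
    constructor
    · apply le_antisymm
      · intro v hv
        obtain ⟨h0, h1⟩ := (hker v).1 hv
        simp only [map_zero, zero_mul, zero_add] at h1
        have h3 : v 3 = 0 := by
          rcases mul_eq_zero.1 h1 with h | h
          · exact absurd h (by simpa using aux_p_ne d β hβ)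
          · exact h
        rw [Submodule.mem_span_pair]
        refine ⟨v 1, v 2, ?_⟩
        funext i
        fin_cases i <;> simp [h0, h3]
      · rw [Submodule.span_le]
        rintro x (rfl | rfl) <;> rw [SetLike.mem_coe, hker] <;>
          constructor <;> simp <;> ring
    · rw [LinearIndependent.pair_iff]
      intro s t hst
      constructor
      · simpa using congrFun hst 1
      · simpa using congrFun hst 2
  · -- case ¬(b = 0 ∧ c = 0)
    intro hbc
    by_cases hc : c = 0
    · -- then b ≠ 0
      have hb : b ≠ 0 := fun h => hbc ⟨h, hc⟩
      subst hc
      have hCb : (C b : MvPolynomial (Fin 4) k) ≠ 0 := by simpa using hb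
      have hinv : (C b⁻¹ : MvPolynomial (Fin 4) k) * C b = 1 := by
        rw [← C_mul, inv_mul_cancel₀ hb, C_1]
      refine ⟨![0, 0, 1, 0], ![0, C d * X 0 + C (2*β) * X 3, 0, -(C b * X 0)], ?_, ?_, ?_, ?_⟩
      · intro i
        fin_cases i <;> simp only [Matrix.cons_val_zero, Matrix.cons_val_one, Matrix.head_cons,
          Matrix.cons_val_two, Matrix.cons_val_three, Matrix.tail_cons]
        · exact isHomogeneous_zero _ _ _
        · exact isHomogeneous_zero _ _ _
        · exact isHomogeneous_one _ _
        · exact isHomogeneous_zero _ _ _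
      · intro i
        fin_cases i <;> simp only [Matrix.cons_val_zero, Matrix.cons_val_one, Matrix.head_cons,
          Matrix.cons_val_two, Matrix.cons_val_three, Matrix.tail_cons]
        · exact isHomogeneous_zero _ _ _
        · exact ((isHomogeneous_C _ d).mul (isHomogeneous_X _ 0)).add
            (((isHomogeneous_C _ (2*β)).mul (isHomogeneous_X _ 3)))
        · exact isHomogeneous_zero _ _ _
        · exact (((isHomogeneous_C _ b).mul (isHomogeneous_X _ 0))).neg
      · apply le_antisymm
        · intro v hv
          obtain ⟨h0, h1⟩ := (hker v).1 hv
          simp only [map_zero, zero_mul, zero_add, add_zero] at h1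
          have hdvd : (X 0 : MvPolynomial (Fin 4) k) ∣ v 3 := by
            have hd2 : (X 0 : MvPolynomial (Fin 4) k) ∣
                (C d * X 0 + C (2*β) * X 3) * v 3 :=
              ⟨-(C b * v 1), by linear_combination h1⟩
            exact (aux_prime_X0.dvd_or_dvd hd2).resolve_left (aux_not_dvd d β hβ)
          obtain ⟨w, hw⟩ := hdvd
          have key : C b * v 1 + (C d * X 0 + C (2*β) * X 3) * w = 0 := by
            apply mul_left_cancel₀ hX0
            rw [mul_zero]
            linear_combination h1 - (C d * X 0 + C (2*β) * X 3) * hw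
          rw [Submodule.mem_span_pair]
          refine ⟨v 2, -(C b⁻¹) * w, ?_⟩
          funext i
          fin_cases i <;> simp
          · exact h0.symm
          · linear_combination (-(C b⁻¹ : MvPolynomial (Fin 4) k)) * key + v 1 * hinv
              - C b⁻¹ * w * X 3 * hC2
          · linear_combination (X 0 * w) * hinv - hw
        · rw [Submodule.span_le]
          rintro x (rfl | rfl) <;> rw [SetLike.mem_coe, hker] <;>
            constructor <;> simp <;> ring
      · rw [LinearIndependent.pair_iff]
        intro s t hst
        have h2 := congrFun hst 2
        have h3 := congrFun hst 3
        simp only [Matrix.cons_val_zero, Matrix.cons_val_one, Matrix.head_cons,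
          Matrix.cons_val_two, Matrix.cons_val_three, Matrix.tail_cons, Pi.add_apply,
          Pi.smul_apply, smul_eq_mul, Pi.zero_apply, mul_one, mul_zero, add_zero,
          zero_add] at h2 h3
        refine ⟨h2, ?_⟩
        rcases mul_eq_zero.1 h3 with h | h
        · exact h
        · exact absurd (neg_eq_zero.1 h) (mul_ne_zero hCb hX0)
    · -- c ≠ 0
      have hCc : (C c : MvPolynomial (Fin 4) k) ≠ 0 := by simpa using hc
      have hinv : (C c⁻¹ : MvPolynomial (Fin 4) k) * C c = 1 := by
        rw [← C_mul, inv_mul_cancel₀ hc, C_1]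
      refine ⟨![0, -(C c), C b, 0], ![0, 0, C d * X 0 + C (2*β) * X 3, -(C c * X 0)],
        ?_, ?_, ?_, ?_⟩
      · intro i
        fin_cases i <;> simp only [Matrix.cons_val_zero, Matrix.cons_val_one, Matrix.head_cons,
          Matrix.cons_val_two, Matrix.cons_val_three, Matrix.tail_cons]
        · exact isHomogeneous_zero _ _ _
        · exact (isHomogeneous_C _ c).neg
        · exact isHomogeneous_C _ b
        · exact isHomogeneous_zero _ _ _
      · intro i
        fin_cases i <;> simp only [Matrix.cons_val_zero, Matrix.cons_val_one, Matrix.head_cons,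
          Matrix.cons_val_two, Matrix.cons_val_three, Matrix.tail_cons]
        · exact isHomogeneous_zero _ _ _
        · exact isHomogeneous_zero _ _ _
        · exact ((isHomogeneous_C _ d).mul (isHomogeneous_X _ 0)).add
            (((isHomogeneous_C _ (2*β)).mul (isHomogeneous_X _ 3)))
        · exact (((isHomogeneous_C _ c).mul (isHomogeneous_X _ 0))).neg
      · apply le_antisymm
        · intro v hv
          obtain ⟨h0, h1⟩ := (hker v).1 hv
          have hdvd : (X 0 : MvPolynomial (Fin 4) k) ∣ v 3 := by
            have hd2 : (X 0 : MvPolynomial (Fin 4) k) ∣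
                (C d * X 0 + C (2*β) * X 3) * v 3 :=
              ⟨-(C b * v 1 + C c * v 2), by linear_combination h1⟩
            exact (aux_prime_X0.dvd_or_dvd hd2).resolve_left (aux_not_dvd d β hβ)
          obtain ⟨w, hw⟩ := hdvd
          have key : C b * v 1 + C c * v 2 + (C d * X 0 + C (2*β) * X 3) * w = 0 := by
            apply mul_left_cancel₀ hX0
            rw [mul_zero]
            linear_combination h1 - (C d * X 0 + C (2*β) * X 3) * hw
          rw [Submodule.mem_span_pair]
          refine ⟨-(C c⁻¹) * v 1, -(C c⁻¹) * w, ?_⟩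
          funext i
          fin_cases i <;> simp
          · exact h0.symm
          · linear_combination v 1 * hinv
          · linear_combination (-(C c⁻¹ : MvPolynomial (Fin 4) k)) * key + v 2 * hinv
              - C c⁻¹ * w * X 3 * hC2
          · linear_combination (X 0 * w) * hinv - hw
        · rw [Submodule.span_le]
          rintro x (rfl | rfl) <;> rw [SetLike.mem_coe, hker] <;>
            constructor <;> simp <;> ring
      · rw [LinearIndependent.pair_iff]
        intro s t hst
        have h1 := congrFun hst 1
        have h3 := congrFun hst 3
        simp only [Matrix.cons_val_zero, Matrix.cons_val_one, Matrix.head_cons,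
          Matrix.cons_val_two, Matrix.cons_val_three, Matrix.tail_cons, Pi.add_apply,
          Pi.smul_apply, smul_eq_mul, Pi.zero_apply, mul_zero, add_zero, zero_add] at h1 h3
        constructor
        · rcases mul_eq_zero.1 h1 with h | h
          · exact h
          · exact absurd (neg_eq_zero.1 h) hCc
        · rcases mul_eq_zero.1 h3 with h | h
          · exact h
          · exact absurd (neg_eq_zero.1 h) (mul_ne_zero hCc hX0)
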